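/- Suppose there exists A ≥ 0 with d(θ,θ') ≤ √n · A · ‖θ − θ'‖₂ for all θ, θ' ∈ Θ. Then for every positive integer k, the covering number satisfies N(Θ, d, 2·√(n/k)·A·M) ≤ C(2l + k − 1, k), where C(·,·) denotes the binomial coefficient. -/

import Mathlib

open MeasureTheory Real

/-- The covering number `N(A, d, ε)`: the minimal number of closed `d`-balls of radius
`ε` (centered in `A`) needed to cover `A`. -/
noncomputable def coveringNumber {X : Type*} (d : X → X → ℝ) (A : Set X) (ε : ℝ) : ℕ :=
  sInf {m : ℕ | ∃ S : Finset X, ↑S ⊆ A ∧ S.card = m ∧ ∀ a ∈ A, ∃ s ∈ S, d a s ≤ ε}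

lemma msum_swap {α β : Type*} [Fintype β] (m : Multiset α) (f : β → α → ℝ) :
    ∑ j, (m.map (f j)).sum = (m.map fun a => ∑ j, f j a).sum := by
  induction m using Multiset.induction_on with
  | empty => simp
  | cons a m ih => simp [Finset.sum_add_distrib, ih]

lemma msum_finsum {ι α : Type*} (s : Finset ι) (t : ι → Multiset α) (h : α → ℝ) :
    (((∑ i ∈ s, t i)).map h).sum = ∑ i ∈ s, ((t i).map h).sum := by
  classical
  induction s using Finset.induction_on with
  | empty => simp
  | insert _ _ hi ih => simp [Finset.sum_insert hi, ih]

lemma mcard_finsum {ι α : Type*} (s : Finset ι) (t : ι → Multiset α) :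
    Multiset.card (∑ i ∈ s, t i) = ∑ i ∈ s, Multiset.card (t i) := by
  classical
  induction s using Finset.induction_on with
  | empty => simp
  | insert _ _ hi ih => simp [Finset.sum_insert hi, ih]

theorem covering_number_le_choose
    (n l : ℕ) (hn : 0 < n) (hl : 0 < l) (M : ℝ) (hM : 0 < M)
    (𝔛 : Type*) (x : Fin n → 𝔛) (φ : (Fin l → ℝ) → 𝔛 → ℝ)
    (A : ℝ) (hA : 0 ≤ A)
    (hcontr : ∀ θ θ' : Fin l → ℝ, (∑ j, |θ j|) ≤ M → (∑ j, |θ' j|) ≤ M →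
      Real.sqrt (∑ i, (φ θ (x i) - φ θ' (x i))^2)
        ≤ Real.sqrt n * A * Real.sqrt (∑ j, (θ j - θ' j)^2))
    (k : ℕ) (hk : 0 < k) :
    coveringNumber (fun θ θ' : Fin l → ℝ => Real.sqrt (∑ i, (φ θ (x i) - φ θ' (x i))^2))
        {θ : Fin l → ℝ | (∑ j, |θ j|) ≤ M}
        (2 * Real.sqrt ((n : ℝ) / k) * A * M)
      ≤ Nat.choose (2 * l + k - 1) k := by
  classical
  have hk0 : (0:ℝ) < (k:ℝ) := by exact_mod_cast hk
  have hsk : (0:ℝ) < Real.sqrt k := Real.sqrt_pos.mpr hk0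
  set f : (Fin l × Bool) → Fin l → ℝ :=
    fun a j => if a.1 = j then (if a.2 then M/k else -(M/k)) else 0 with hf
  set g : Sym (Fin l × Bool) k → (Fin l → ℝ) :=
    fun m j => ((m : Multiset (Fin l × Bool)).map (fun a => f a j)).sum with hgdef
  -- every center lies in Θ
  have hΘ : ∀ m : Sym (Fin l × Bool) k, (∑ j, |g m j|) ≤ M := by
    intro m
    have h1 : ∀ j, |g m j| ≤ ((m : Multiset (Fin l × Bool)).map (fun a => |f a j|)).sum := by
      intro j
      have := Multiset.abs_sum_le_sum_abs (α := ℝ)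
        (s := (m : Multiset (Fin l × Bool)).map (fun a => f a j))
      rwa [Multiset.map_map] at this
    calc (∑ j, |g m j|) ≤ ∑ j, ((m : Multiset (Fin l × Bool)).map (fun a => |f a j|)).sum :=
          Finset.sum_le_sum (fun j _ => h1 j)
      _ = ((m : Multiset (Fin l × Bool)).map (fun a => ∑ j, |f a j|)).sum :=
          msum_swap _ _
      _ = ((m : Multiset (Fin l × Bool)).map (fun _ => M/k)).sum := by
          congr 1
          apply Multiset.map_congr rfl
          intro a _
          have : ∀ j, |f a j| = if a.1 = j then M/k else 0 := by
            intro j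
            rcases a with ⟨i, b⟩
            cases b <;> by_cases h : i = j <;>
              simp [hf, h, abs_of_nonneg (le_of_lt (div_pos hM hk0))]
          simp only [this]
          rw [Finset.sum_ite_eq Finset.univ a.1 (fun _ => M/k)]
          simp
      _ = k * (M/k) := by
          rw [Multiset.map_const', Multiset.sum_replicate, Sym.card_coe]
          simp [nsmul_eq_mul]
      _ = M := by field_simp
  -- covering property
  have hcover : ∀ θ : Fin l → ℝ, (∑ j, |θ j|) ≤ M →
      ∃ m : Sym (Fin l × Bool) k,
        Real.sqrt (∑ j, (θ j - g m j)^2) ≤ 2 * M / Real.sqrt k := by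
    intro θ hθ
    set q : ℝ := M / k with hq
    have hq0 : 0 < q := div_pos hM hk0
    have hqk : (k:ℝ) * q = M := by rw [hq]; field_simp
    set c : Fin l → ℕ := fun j => ⌊|θ j| / q⌋₊ with hc
    have hc1 : ∀ j, (c j : ℝ) * q ≤ |θ j| := by
      intro j
      have h1 : (c j : ℝ) ≤ |θ j| / q := Nat.floor_le (by positivity)
      calc (c j : ℝ) * q ≤ (|θ j| / q) * q := by nlinarith
        _ = |θ j| := div_mul_cancel₀ _ (ne_of_gt hq0)
    have hc2 : ∀ j, |θ j| < ((c j : ℝ) + 1) * q := by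
      intro j
      have h1 : |θ j| / q < (c j : ℝ) + 1 := by exact_mod_cast Nat.lt_floor_add_one (|θ j| / q)
      calc |θ j| = (|θ j| / q) * q := (div_mul_cancel₀ _ (ne_of_gt hq0)).symm
        _ < ((c j : ℝ) + 1) * q := by nlinarith
    set s := ∑ j, c j with hsdef
    have hs : s ≤ k := by
      have h1 : (s : ℝ) * q ≤ (k : ℝ) * q := by
        rw [hqk]
        calc (s : ℝ) * q = ∑ j, (c j : ℝ) * q := by
              rw [hsdef]; push_cast; rw [Finset.sum_mul]
          _ ≤ ∑ j, |θ j| := Finset.sum_le_sum (fun j _ => hc1 j)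
          _ ≤ M := hθ
      have := le_of_mul_le_mul_right h1 hq0
      exact_mod_cast this
    set r := k - s with hr
    set p := r % 2 with hpdef
    have hp1 : (p : ℝ) ≤ 1 := by
      have : p ≤ 1 := by omega
      exact_mod_cast this
    set j0 : Fin l := ⟨0, hl⟩ with hj0
    set b : Fin l → Bool := fun j => decide (0 ≤ θ j) with hb
    set base : Multiset (Fin l × Bool) := ∑ j, Multiset.replicate (c j) (j, b j) with hbase
    set pad : Multiset (Fin l × Bool) :=
      Multiset.replicate (r/2) (j0, true) + Multiset.replicate (r/2) (j0, false)
        + Multiset.replicate p (j0, true) with hpad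
    have hcard : Multiset.card (base + pad) = k := by
      rw [Multiset.card_add, hbase, mcard_finsum]
      simp only [Multiset.card_replicate, hpad, Multiset.card_add]
      rw [← hsdef]
      omega
    refine ⟨⟨base + pad, hcard⟩, ?_⟩
    set sc : Fin l → ℝ := fun j => (if b j then (c j : ℝ) else -(c j : ℝ)) * q with hsc
    set δ : Fin l → ℝ := fun j => if j0 = j then (p : ℝ) * q else 0 with hδ
    have hg : ∀ j, g ⟨base + pad, hcard⟩ j = sc j + δ j := by
      intro j
      rw [hgdef]
      show ((base + pad).map (fun a => f a j)).sum = _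
      rw [Multiset.map_add, Multiset.sum_add]
      have hbasej : (base.map (fun a => f a j)).sum = sc j := by
        rw [hbase, msum_finsum]
        have h1 : ∀ j' : Fin l, ((Multiset.replicate (c j') (j', b j')).map (fun a => f a j)).sum
            = if j' = j then (c j' : ℝ) * (if b j' then q else -q) else 0 := by
          intro j'
          rw [Multiset.map_replicate, Multiset.sum_replicate, nsmul_eq_mul]
          by_cases h : j' = j <;> simp [hf, h, hq]
        rw [Finset.sum_congr rfl (fun j' _ => h1 j')]
        rw [Finset.sum_ite_eq' Finset.univ j (fun j' => (c j' : ℝ) * (if b j' then q else -q))]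
        simp only [Finset.mem_univ, if_true, hsc]
        cases hbj : b j <;> simp <;> try ring
      have hpadj : (pad.map (fun a => f a j)).sum = δ j := by
        rw [hpad]
        simp only [Multiset.map_add, Multiset.sum_add, Multiset.map_replicate,
          Multiset.sum_replicate, nsmul_eq_mul, hf, hδ]
        by_cases h : j0 = j <;> simp [h, hq] <;> try ring
      rw [hbasej, hpadj]
    -- per-coordinate error bounds
    have hkey : ∀ j, |θ j - sc j| ≤ q ∧ |θ j - sc j| ≤ |θ j| := by
      intro j
      have hcq : (0:ℝ) ≤ (c j : ℝ) * q := by positivity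
      by_cases h : 0 ≤ θ j
      · have hbj : b j = true := by simp [hb, h]
        have habs : |θ j| = θ j := abs_of_nonneg h
        have e1 : (c j : ℝ) * q ≤ θ j := habs ▸ hc1 j
        have e2 : θ j < ((c j : ℝ) + 1) * q := habs ▸ hc2 j
        have hscj : sc j = (c j : ℝ) * q := by rw [hsc]; simp [hbj]
        rw [hscj, abs_of_nonneg (by linarith)]
        constructor <;> [nlinarith; linarith [abs_of_nonneg h]]
      · have hbj : b j = false := by simp [hb, h]
        push_neg at h
        have habs : |θ j| = -θ j := abs_of_neg h
        have e1 : (c j : ℝ) * q ≤ -θ j := habs ▸ hc1 j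
        have e2 : -θ j < ((c j : ℝ) + 1) * q := habs ▸ hc2 j
        have hscj : sc j = -((c j : ℝ) * q) := by rw [hsc]; simp [hbj]
        rw [hscj, sub_neg_eq_add, abs_of_nonpos (by linarith)]
        constructor <;> [nlinarith; linarith [abs_of_neg h]]
    have hsumsq : ∑ j, (θ j - sc j)^2 ≤ M^2 / k := by
      calc ∑ j, (θ j - sc j)^2 ≤ ∑ j, q * |θ j| := by
            apply Finset.sum_le_sum
            intro j _
            have h1 := (hkey j).1
            have h2 := (hkey j).2
            calc (θ j - sc j)^2 = |θ j - sc j| * |θ j - sc j| := by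
                  rw [sq, ← abs_mul_abs_self]
              _ ≤ q * |θ j| := mul_le_mul h1 h2 (abs_nonneg _) hq0.le
        _ = q * ∑ j, |θ j| := by rw [Finset.mul_sum]
        _ ≤ q * M := mul_le_mul_of_nonneg_left hθ hq0.le
        _ = M^2 / k := by rw [hq]; ring
    -- norms
    set u : EuclideanSpace ℝ (Fin l) := WithLp.toLp 2 (fun j => θ j - sc j) with hu
    set v : EuclideanSpace ℝ (Fin l) := WithLp.toLp 2 (fun j => -δ j) with hv
    have hnorm : ∀ w : EuclideanSpace ℝ (Fin l), ‖w‖ = Real.sqrt (∑ j, (w j)^2) := by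
      intro w
      rw [EuclideanSpace.norm_eq]
      congr 1
      exact Finset.sum_congr rfl (fun j _ => by rw [Real.norm_eq_abs, sq_abs])
    have hswap : Real.sqrt (∑ j, (θ j - g ⟨base + pad, hcard⟩ j)^2) = ‖u + v‖ := by
      rw [hnorm]
      congr 1
      apply Finset.sum_congr rfl
      intro j _
      have : (u + v) j = θ j - g ⟨base + pad, hcard⟩ j := by
        have happ : (u + v) j = u j + v j := rfl
        rw [happ, hg j, hu, hv]
        simp
        ring
      rw [this]
    have hun : ‖u‖ ≤ M / Real.sqrt k := by
      rw [hnorm]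
      have h1 : Real.sqrt (∑ j, (u j)^2) ≤ Real.sqrt (M^2 / k) := by
        apply Real.sqrt_le_sqrt
        exact hsumsq
      have h2 : Real.sqrt (M^2 / k) = M / Real.sqrt k := by
        rw [Real.sqrt_div (sq_nonneg M), Real.sqrt_sq hM.le]
      rw [← h2]; exact h1
    have hvn : ‖v‖ ≤ M / k := by
      rw [hnorm]
      have h1 : ∑ j, (v j)^2 = ((p:ℝ) * q)^2 := by
        have : ∀ j, (v j)^2 = if j0 = j then ((p:ℝ)*q)^2 else 0 := by
          intro j
          rw [hv]
          by_cases h : j0 = j <;> simp [hδ, h]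
        rw [Finset.sum_congr rfl (fun j _ => this j), Finset.sum_ite_eq Finset.univ j0]
        simp
      rw [h1, Real.sqrt_sq (by positivity)]
      calc (p:ℝ) * q ≤ 1 * q := mul_le_mul_of_nonneg_right hp1 hq0.le
        _ = M / k := by rw [one_mul, hq]
    have hkk : Real.sqrt k ≤ (k:ℝ) := by
      have h1 : ((k:ℝ)) ≤ (k:ℝ)^2 := by
        have : (1:ℝ) ≤ (k:ℝ) := by exact_mod_cast hk
        nlinarith
      calc Real.sqrt k ≤ Real.sqrt ((k:ℝ)^2) := Real.sqrt_le_sqrt h1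
        _ = (k:ℝ) := Real.sqrt_sq hk0.le
    have hMk : M / k ≤ M / Real.sqrt k := by
      apply div_le_div_of_nonneg_left hM.le hsk hkk
    calc Real.sqrt (∑ j, (θ j - g ⟨base + pad, hcard⟩ j)^2) = ‖u + v‖ := hswap
      _ ≤ ‖u‖ + ‖v‖ := norm_add_le u v
      _ ≤ M / Real.sqrt k + M / k := add_le_add hun hvn
      _ ≤ 2 * M / Real.sqrt k := by rw [two_mul, add_div]; exact add_le_add le_rfl hMk
  -- assemble
  set S : Finset (Fin l → ℝ) := Finset.image g Finset.univ with hS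
  have hmem : S.card ∈ {m : ℕ | ∃ S : Finset (Fin l → ℝ),
      ↑S ⊆ {θ : Fin l → ℝ | (∑ j, |θ j|) ≤ M} ∧ S.card = m ∧
      ∀ a ∈ {θ : Fin l → ℝ | (∑ j, |θ j|) ≤ M}, ∃ s ∈ S,
        (fun θ θ' : Fin l → ℝ => Real.sqrt (∑ i, (φ θ (x i) - φ θ' (x i))^2)) a s
          ≤ 2 * Real.sqrt ((n : ℝ) / k) * A * M} := by
    refine ⟨S, ?_, rfl, ?_⟩
    · intro v hv
      simp only [hS, Finset.coe_image, Set.mem_image] at hv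
      obtain ⟨m, _, rfl⟩ := hv
      exact hΘ m
    · intro θ hθ
      obtain ⟨m, hm⟩ := hcover θ hθ
      refine ⟨g m, Finset.mem_image_of_mem g (Finset.mem_univ m), ?_⟩
      have h1 := hcontr θ (g m) hθ (hΘ m)
      have h2 : Real.sqrt n * A * Real.sqrt (∑ j, (θ j - g m j)^2)
          ≤ Real.sqrt n * A * (2 * M / Real.sqrt k) := by
        apply mul_le_mul_of_nonneg_left hm (by positivity)
      have h3 : Real.sqrt n * A * (2 * M / Real.sqrt k)
          = 2 * Real.sqrt ((n : ℝ) / k) * A * M := by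
        rw [Real.sqrt_div (by positivity : (0:ℝ) ≤ (n:ℝ))]
        ring
      calc _ ≤ _ := h1
        _ ≤ _ := h2
        _ = _ := h3
  calc coveringNumber _ _ _ ≤ S.card := Nat.sInf_le hmem
    _ ≤ Fintype.card (Sym (Fin l × Bool) k) := by
        simpa [hS, Finset.card_univ] using Finset.card_image_le
          (s := (Finset.univ : Finset (Sym (Fin l × Bool) k))) (f := g)
    _ = Nat.choose (2 * l + k - 1) k := by
        rw [Sym.card_sym_eq_choose]
        congr 2
        simp [Fintype.card_prod, mul_comm]
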